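/- For every integer k ≥ 2 there exists a simple set family 𝓢 over the universe [k²] (any two distinct sets of 𝓢 intersect in at most one element) such that some k sets of 𝓢 have union [k²], yet there is a greedy execution (a sequence T₁, …, T_m of sets of 𝓢 in which each T_i covers the maximum number of yet-uncovered elements among all sets in 𝓢, continuing until all of [k²] is covered) whose length m exceeds (k−1)·ln k. -/

import Mathlib

open Finset

private def gf (k : ℕ) : ℕ → ℕ
  | 0 => 0
  | t+1 => gf k t + (k - gf k t / k)

private lemma gf_succ (k t : ℕ) : gf k (t+1) = gf k t + (k - gf k t / k) := rfl

private lemma arith1 {k c : ℕ} (hc : c < k * k) :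
    c + (k - c / k) ≤ k * k := by
  have hk : 0 < k := by by_contra h; simp [Nat.eq_zero_of_not_pos h] at hc
  have hq : c / k < k := Nat.div_lt_of_lt_mul hc
  have hmod : k * (c / k) + c % k = c := Nat.div_add_mod c k
  have he : c % k < k := Nat.mod_lt _ hk
  rcases Nat.lt_or_ge (c / k) (k - 1) with h | h
  · -- k - c/k ≥ 2
    have h2 : k * 2 ≤ k * (k - c / k) := Nat.mul_le_mul_left k (by omega)
    have h3 : k * (c / k) + k * (k - c / k) = k * k := by
      rw [← Nat.mul_add]; congr 1; omega
    have hs : k - c / k ≤ k := Nat.sub_le _ _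
    linarith [hmod, he]
  · -- c/k = k - 1, step is of size ≤ 1... k - c/k = 1
    have h1 : k - c / k = 1 := by omega
    omega

private lemma gf_le {k : ℕ} (hk : 0 < k) : ∀ t, gf k t ≤ k * k := by
  intro t
  induction t with
  | zero => simp [gf]
  | succ t ih =>
    rw [gf_succ]
    rcases Nat.lt_or_ge (gf k t) (k * k) with h | h
    · exact arith1 h
    · have heq : gf k t = k * k := le_antisymm ih h
      rw [heq, Nat.mul_div_cancel_left _ hk]
      simp

private lemma gf_mono {k : ℕ} : Monotone (gf k) := by
  apply monotone_nat_of_le_succ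
  intro t; rw [gf_succ]; omega

private lemma gf_fix {k : ℕ} (hk : 0 < k) {t : ℕ} (h : gf k t = k * k) :
    gf k (t+1) = k * k := by
  rw [gf_succ, h, Nat.mul_div_cancel_left _ hk]; simp

private lemma gf_reach {k : ℕ} (hk : 0 < k) : gf k (k * k) = k * k := by
  have key : ∀ t, gf k t = k * k ∨ t ≤ gf k t := by
    intro t
    induction t with
    | zero => right; simp
    | succ t ih =>
      rcases ih with h | h
      · left; exact gf_fix hk h
      · rcases Nat.lt_or_ge (gf k t) (k * k) with h2 | h2
        · right
          have hq : gf k t / k < k := Nat.div_lt_of_lt_mul h2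
          rw [gf_succ]; omega
        · left; exact gf_fix hk (le_antisymm (gf_le hk t) h2)
      
  rcases key (k * k) with h | h
  · exact h
  · exact le_antisymm (gf_le hk _) h

private lemma gf_decomp {k : ℕ} : ∀ i p, p < gf k i → ∃ j, j < i ∧ gf k j ≤ p ∧ p < gf k (j+1) := by
  intro i
  induction i with
  | zero => intro p hp; simp [gf] at hp
  | succ i ih =>
    intro p hp
    rcases Nat.lt_or_ge p (gf k i) with h | h
    · obtain ⟨j, h1, h2, h3⟩ := ih p h
      exact ⟨j, by omega, h2, h3⟩
    · exact ⟨i, by omega, h, hp⟩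


private noncomputable def wt (k p : ℕ) : ℝ :=
  if p % k + p / k < k then ((k:ℝ) - (p/k : ℕ) + 1)⁻¹ else ((k:ℝ) - (p/k : ℕ))⁻¹

private lemma wt_nonneg {k p : ℕ} (hpk : p < k * k) : 0 ≤ wt k p := by
  have hq : p / k < k := Nat.div_lt_of_lt_mul hpk
  have h1 : (0:ℝ) < (k:ℝ) - (p/k : ℕ) := by
    have := (Nat.cast_lt (α := ℝ)).2 hq
    linarith
  unfold wt
  split
  · positivity
  · positivity

private lemma wt_le {k c p : ℕ} (hc : c < k * k) (h1 : c ≤ p) (h2 : p < c + (k - c / k)) :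
    wt k p ≤ ((k:ℝ) - (c/k : ℕ))⁻¹ := by
  have hk : 0 < k := by by_contra h; simp [Nat.eq_zero_of_not_pos h] at hc
  have hq : c / k < k := Nat.div_lt_of_lt_mul hc
  have hkq : (0:ℝ) < (k:ℝ) - (c/k : ℕ) := by
    have := (Nat.cast_lt (α := ℝ)).2 hq; linarith
  have hcmod : k * (c / k) + c % k = c := Nat.div_add_mod c k
  have hce : c % k < k := Nat.mod_lt _ hk
  have hpq1 : c / k ≤ p / k := Nat.div_le_div_right h1
  have hexp : k * (c / k + 2) = k * (c / k) + k + k := by ring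
  have hsub : k - c / k ≤ k := Nat.sub_le _ _
  have hp2 : p < k * (c / k + 2) := by linarith
  have hpq2 : p / k < c / k + 2 := Nat.div_lt_of_lt_mul hp2
  have hpmod : k * (p / k) + p % k = p := Nat.div_add_mod p k
  rcases Nat.lt_or_ge (p / k) (c / k + 1) with hcase | hcase
  · -- p / k = c / k
    have hpc : p / k = c / k := by omega
    unfold wt
    rw [hpc]
    split
    · apply inv_anti₀ hkq; linarith
    · exact le_refl _
  · -- p / k = c / k + 1
    have hpc : p / k = c / k + 1 := by omega
    have hkmul : k * (p / k) = k * (c / k) + k := by rw [hpc]; ring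
    have hsub2 : c / k + (k - c / k) = k := by omega
    have hcond : p % k + p / k < k := by
      have h2' : p + c / k < c + k := by omega
      linarith
    unfold wt
    rw [if_pos hcond, hpc]
    have heq : ((k:ℝ) - (↑(c / k) + 1 : ℕ) + 1) = (k:ℝ) - (c/k : ℕ) := by
      push_cast; ring
    rw [heq]

private lemma step_sum {k c : ℕ} (hc : c < k * k) :
    ∑ p ∈ Finset.Ico c (c + (k - c / k)), wt k p ≤ 1 := by
  have hk : 0 < k := by by_contra h; simp [Nat.eq_zero_of_not_pos h] at hc
  have hq : c / k < k := Nat.div_lt_of_lt_mul hc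
  have hkq : (0:ℝ) < (k:ℝ) - (c/k : ℕ) := by
    have := (Nat.cast_lt (α := ℝ)).2 hq; linarith
  calc ∑ p ∈ Finset.Ico c (c + (k - c / k)), wt k p
      ≤ (Finset.Ico c (c + (k - c / k))).card • ((k:ℝ) - (c/k : ℕ))⁻¹ := by
        apply Finset.sum_le_card_nsmul
        intro p hp
        rw [Finset.mem_Ico] at hp
        exact wt_le hc hp.1 hp.2
    _ = 1 := by
        rw [Nat.card_Ico, Nat.add_sub_cancel_left, nsmul_eq_mul]
        have hcast : ((k - c / k : ℕ) : ℝ) = (k:ℝ) - (c/k : ℕ) := by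
          rw [Nat.cast_sub (le_of_lt hq)]
        rw [hcast, mul_inv_cancel₀ (ne_of_gt hkq)]

private lemma sum_wt_le {k : ℕ} (hk : 0 < k) : ∀ t, ∑ p ∈ Finset.range (gf k t), wt k p ≤ t := by
  intro t
  induction t with
  | zero => simp [gf]
  | succ t ih =>
    rcases Nat.lt_or_ge (gf k t) (k * k) with h | h
    · have hdec : ∑ p ∈ Finset.range (gf k t), wt k p
          + ∑ p ∈ Finset.Ico (gf k t) (gf k (t+1)), wt k p
          = ∑ p ∈ Finset.range (gf k (t+1)), wt k p := by
        rw [Finset.range_eq_Ico, Finset.range_eq_Ico]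
        exact Finset.sum_Ico_consecutive _ (Nat.zero_le _) (gf_mono (Nat.le_succ t))
      have hstep : ∑ p ∈ Finset.Ico (gf k t) (gf k (t+1)), wt k p ≤ 1 := by
        rw [gf_succ]; exact step_sum h
      push_cast
      linarith
    · have heq : gf k t = k * k := le_antisymm (gf_le hk t) h
      rw [gf_fix hk heq, ← heq]
      push_cast
      linarith

private lemma sum_block (k : ℕ) (f : ℕ → ℝ) :
    ∀ a, ∑ p ∈ Finset.range (a * k), f p = ∑ q ∈ Finset.range a, ∑ e ∈ Finset.range k, f (q * k + e) := by
  intro a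
  induction a with
  | zero => simp
  | succ a ih =>
    have hsplit : ∑ p ∈ Finset.range (a * k), f p + ∑ p ∈ Finset.Ico (a * k) (a * k + k), f p
        = ∑ p ∈ Finset.range (a * k + k), f p := by
      rw [Finset.range_eq_Ico, Finset.range_eq_Ico]
      exact Finset.sum_Ico_consecutive f (Nat.zero_le _) (Nat.le_add_right _ _)
    have hmul : (a + 1) * k = a * k + k := by ring
    rw [Finset.sum_range_succ, ← ih, hmul, ← hsplit]
    congr 1
    rw [Finset.sum_Ico_eq_sum_range]
    simp

private lemma row_sum {k q : ℕ} (hq : q < k) :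
    ∑ e ∈ Finset.range k, wt k (q * k + e)
      = ((k - q : ℕ) : ℝ) * ((k:ℝ) - (q:ℕ) + 1)⁻¹ + (q : ℝ) * ((k:ℝ) - (q:ℕ))⁻¹ := by
  have hk : 0 < k := by omega
  have hterm : ∀ e ∈ Finset.range k, wt k (q * k + e)
      = if e + q < k then ((k:ℝ) - (q:ℕ) + 1)⁻¹ else ((k:ℝ) - (q:ℕ))⁻¹ := by
    intro e he
    rw [Finset.mem_range] at he
    have hdiv : (q * k + e) / k = q := by
      rw [mul_comm, Nat.mul_add_div hk, Nat.div_eq_of_lt he, Nat.add_zero]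
    have hmod : (q * k + e) % k = e := by
      rw [mul_comm, Nat.mul_add_mod, Nat.mod_eq_of_lt he]
    unfold wt
    rw [hdiv, hmod]
  rw [Finset.sum_congr rfl hterm, Finset.sum_ite]
  have hf1 : Finset.filter (fun e => e + q < k) (Finset.range k) = Finset.range (k - q) := by
    ext e; simp only [Finset.mem_filter, Finset.mem_range]; omega
  have hf2 : Finset.filter (fun e => ¬ e + q < k) (Finset.range k) = Finset.Ico (k - q) k := by
    ext e; simp only [Finset.mem_filter, Finset.mem_range, Finset.mem_Ico]; omega
  rw [hf1, hf2, Finset.sum_const, Finset.sum_const, Finset.card_range, Nat.card_Ico,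
    nsmul_eq_mul, nsmul_eq_mul]
  have h3 : k - (k - q) = q := by omega
  rw [h3]

private lemma log_le_harmonic : ∀ n : ℕ, Real.log ((n:ℝ)+1) ≤ ∑ r ∈ Finset.range n, ((r:ℝ)+1)⁻¹ := by
  intro n
  induction n with
  | zero => simp
  | succ n ih =>
    rw [Finset.sum_range_succ]
    have h1 : (0:ℝ) < (n:ℝ) + 1 := by positivity
    have h2 : (0:ℝ) < (n:ℝ) + 2 := by positivity
    have hx : (0:ℝ) < ((n:ℝ)+2)/((n:ℝ)+1) := by positivity
    have hlog := Real.log_le_sub_one_of_pos hx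
    rw [Real.log_div (ne_of_gt h2) (ne_of_gt h1)] at hlog
    have hfrac : ((n:ℝ)+2)/((n:ℝ)+1) - 1 = ((n:ℝ)+1)⁻¹ := by
      field_simp
      norm_num
    rw [hfrac] at hlog
    have hcast : ((n+1 : ℕ):ℝ) + 1 = (n:ℝ) + 2 := by push_cast; ring
    rw [hcast]
    linarith

private lemma key_ineq {k : ℕ} (hk : 2 ≤ k) :
    ((k:ℝ) - 1) * Real.log k
      < ∑ q ∈ Finset.range k, (((k - q : ℕ) : ℝ) * ((k:ℝ) - (q:ℕ) + 1)⁻¹ + (q : ℝ) * ((k:ℝ) - (q:ℕ))⁻¹) := by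
  set F : ℕ → ℝ := fun q => ((k - q : ℕ) : ℝ) * ((k:ℝ) - (q:ℕ) + 1)⁻¹ + (q : ℝ) * ((k:ℝ) - (q:ℕ))⁻¹ with hF
  have hFnonneg : ∀ q, q < k → 0 ≤ F q := by
    intro q hq
    have h1 : (0:ℝ) < (k:ℝ) - (q:ℕ) := by
      have := (Nat.cast_lt (α := ℝ)).2 hq; linarith
    have h2 : (0:ℝ) < (k:ℝ) - (q:ℕ) + 1 := by linarith
    rw [hF]
    positivity
  -- reflect the sum
  have hreflect : ∑ q ∈ Finset.range k, F q = ∑ r ∈ Finset.range k, F (k - 1 - r) :=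
    (Finset.sum_range_reflect F k).symm
  -- log bound
  have hlog : Real.log k ≤ ∑ r ∈ Finset.range (k-1), ((r:ℝ)+1)⁻¹ := by
    have := log_le_harmonic (k-1)
    have hcast : ((k-1 : ℕ):ℝ) + 1 = (k:ℝ) := by
      have : (1:ℕ) ≤ k := by omega
      push_cast [this]
      ring
    rwa [hcast] at this
  have hk1 : (0:ℝ) ≤ (k:ℝ) - 1 := by
    have : (2:ℝ) ≤ (k:ℝ) := by exact_mod_cast hk
    linarith
  have step1 : ((k:ℝ) - 1) * Real.log k ≤ ∑ r ∈ Finset.range (k-1), ((k:ℝ) - 1) * ((r:ℝ)+1)⁻¹ := by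
    rw [← Finset.mul_sum]
    exact mul_le_mul_of_nonneg_left hlog hk1
  have step2 : ∑ r ∈ Finset.range (k-1), ((k:ℝ) - 1) * ((r:ℝ)+1)⁻¹
      < ∑ r ∈ Finset.range (k-1), F (k - 1 - r) := by
    apply Finset.sum_lt_sum_of_nonempty
    · rw [Finset.nonempty_range_iff]; omega
    · intro r hr
      rw [Finset.mem_range] at hr
      have hq : k - (k - 1 - r) = r + 1 := by omega
      have hq2 : k - 1 - r < k := by omega
      have hcast1 : ((k - 1 - r : ℕ) : ℝ) = (k:ℝ) - 1 - (r:ℝ) := by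
        have h1 : (1:ℕ) + r ≤ k := by omega
        push_cast [Nat.cast_sub (by omega : 1 + r ≤ k)]
        rw [Nat.cast_sub (by omega : r ≤ k - 1), Nat.cast_sub (by omega : 1 ≤ k)]
        push_cast
        ring
      have hFq : F (k - 1 - r) = ((r:ℝ)+1) * ((r:ℝ)+2)⁻¹ + ((k:ℝ) - 1 - r) * ((r:ℝ)+1)⁻¹ := by
        rw [hF]
        simp only [hq, hcast1]
        have e1 : (k:ℝ) - ((k:ℝ) - 1 - (r:ℝ)) + 1 = (r:ℝ) + 2 := by ring
        have e2 : (k:ℝ) - ((k:ℝ) - 1 - (r:ℝ)) = (r:ℝ) + 1 := by ring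
        rw [e1, e2]
        push_cast
        ring
      rw [hFq]
      have hx1 : (0:ℝ) < (r:ℝ) + 1 := by positivity
      have hx2 : (0:ℝ) < (r:ℝ) + 2 := by positivity
      have hmain : (r:ℝ) / ((r:ℝ)+1) < ((r:ℝ)+1) / ((r:ℝ)+2) := by
        rw [div_lt_div_iff₀ hx1 hx2]
        nlinarith
      have hmain' : (r:ℝ) * ((r:ℝ)+1)⁻¹ < ((r:ℝ)+1) * ((r:ℝ)+2)⁻¹ := by
        rw [← div_eq_mul_inv, ← div_eq_mul_inv]
        exact hmain
      have hsplit : ((k:ℝ) - 1 - r) * ((r:ℝ)+1)⁻¹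
          = ((k:ℝ) - 1) * ((r:ℝ)+1)⁻¹ - (r:ℝ) * ((r:ℝ)+1)⁻¹ := by ring
      rw [hsplit]
      linarith
  have step3 : ∑ r ∈ Finset.range (k-1), F (k - 1 - r) ≤ ∑ r ∈ Finset.range k, F (k - 1 - r) := by
    apply Finset.sum_le_sum_of_subset_of_nonneg
    · apply Finset.range_subset_range.2; omega
    · intro r hr _
      rw [Finset.mem_range] at hr
      exact hFnonneg _ (by omega)
  rw [hreflect]
  calc ((k:ℝ) - 1) * Real.log k ≤ _ := step1
    _ < _ := step2
    _ ≤ _ := step3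

private lemma m_bound {k : ℕ} (hk : 2 ≤ k) {t : ℕ} (ht : gf k t = k * k) :
    ((k:ℝ) - 1) * Real.log k < (t : ℝ) := by
  have hk0 : 0 < k := by omega
  have h1 := sum_wt_le hk0 t
  rw [ht] at h1
  have h2 : ∑ p ∈ Finset.range (k * k), wt k p
      = ∑ q ∈ Finset.range k, (((k - q : ℕ) : ℝ) * ((k:ℝ) - (q:ℕ) + 1)⁻¹ + (q : ℝ) * ((k:ℝ) - (q:ℕ))⁻¹) := by
    rw [sum_block k (wt k) k]
    exact Finset.sum_congr rfl fun q hq => row_sum (Finset.mem_range.1 hq)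
  calc ((k:ℝ) - 1) * Real.log k < _ := key_ineq hk
    _ = ∑ p ∈ Finset.range (k * k), wt k p := h2.symm
    _ ≤ t := h1

private lemma card_interval {n a b : ℕ} (hb : b ≤ n) :
    (Finset.univ.filter fun p : Fin n => a ≤ p.val ∧ p.val < b).card = b - a := by
  have hmem : ∀ x ∈ Finset.Ico a b, x < n := fun x hx => lt_of_lt_of_le (Finset.mem_Ico.1 hx).2 hb
  have heq : (Finset.univ.filter fun p : Fin n => a ≤ p.val ∧ p.val < b)
      = (Finset.Ico a b).attachFin hmem := by
    ext x
    simp [Finset.mem_attachFin, Finset.mem_Ico]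
  rw [heq, Finset.card_attachFin, Nat.card_Ico]

private lemma mod_interval_eq {k c x y : ℕ} (hx1 : c ≤ x) (hx2 : x < c + k)
    (hy1 : c ≤ y) (hy2 : y < c + k) (hmod : x % k = y % k) : x = y := by
  rcases le_total x y with h | h
  · have hd : k ∣ y - x := (Nat.modEq_iff_dvd' h).1 hmod
    have h0 : y - x = 0 := Nat.eq_zero_of_dvd_of_lt hd (by omega) |>.symm ▸ rfl
    omega
  · have hd : k ∣ x - y := (Nat.modEq_iff_dvd' h).1 hmod.symm
    have h0 : x - y = 0 := Nat.eq_zero_of_dvd_of_lt hd (by omega) |>.symm ▸ rfl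
    omega
/-- For every `k ≥ 2` there is a simple set family `𝓢` over `[k²]` such that some `k`
sets of `𝓢` cover the universe, yet some greedy execution (each picked set covers the
maximum number of yet-uncovered elements, steps taken only while something is uncovered,
ending with everything covered) uses more than `(k-1)·ln k` sets. -/
theorem stmt15 (k : ℕ) (hk : 2 ≤ k) :
    ∃ 𝓢 : Finset (Finset (Fin (k * k))),
      (∀ S ∈ 𝓢, ∀ S' ∈ 𝓢, S ≠ S' → (S ∩ S').card ≤ 1) ∧
      (∃ 𝓚 ⊆ 𝓢, 𝓚.card = k ∧ 𝓚.biUnion id = Finset.univ) ∧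
      ∃ (m : ℕ) (T : Fin m → Finset (Fin (k * k))),
        (∀ i, T i ∈ 𝓢) ∧
        (∀ i : Fin m, (Finset.univ.filter fun j => j < i).biUnion T ≠ Finset.univ) ∧
        (∀ i : Fin m, ∀ S ∈ 𝓢,
          (S \ (Finset.univ.filter fun j => j < i).biUnion T).card
            ≤ (T i \ (Finset.univ.filter fun j => j < i).biUnion T).card) ∧
        Finset.univ.biUnion T = Finset.univ ∧
        ((k : ℝ) - 1) * Real.log k < (m : ℝ) := by
  have hk0 : 0 < k := by omega
  have hkn : k ≤ k * k := Nat.le_mul_of_pos_left k hk0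
  have hex : ∃ t, gf k t = k * k := ⟨k * k, gf_reach hk0⟩
  set m := Nat.find hex with hm
  have hgfm : gf k m = k * k := Nat.find_spec hex
  have hltm : ∀ t, t < m → gf k t < k * k := fun t ht =>
    lt_of_le_of_ne (gf_le hk0 t) (Nat.find_min hex ht)
  set T : Fin m → Finset (Fin (k * k)) := fun i =>
    Finset.univ.filter fun p => gf k i.val ≤ p.val ∧ p.val < gf k (i.val + 1) with hT
  set col : ℕ → Finset (Fin (k * k)) := fun j =>
    Finset.univ.filter fun p => p.val % k = j with hcol
  -- step size bound
  have hstep : ∀ c : ℕ, k - c / k ≤ k := fun c => Nat.sub_le _ _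
  -- covered prefix
  have hcovered : ∀ i : Fin m, (Finset.univ.filter fun j => j < i).biUnion T
      = Finset.univ.filter fun p : Fin (k * k) => p.val < gf k i.val := by
    intro i
    ext p
    simp only [Finset.mem_biUnion, Finset.mem_filter, Finset.mem_univ, true_and, hT]
    constructor
    · rintro ⟨j, hj, _, h2⟩
      exact lt_of_lt_of_le h2 (gf_mono (Nat.succ_le_of_lt hj))
    · intro hp
      obtain ⟨j, hj, h1, h2⟩ := gf_decomp i.val p.val hp
      exact ⟨⟨j, lt_trans hj i.isLt⟩, hj, h1, h2⟩
  refine ⟨(Finset.range k).image col ∪ Finset.univ.image T, ?_, ?_, m, T, ?_, ?_, ?_, ?_, ?_⟩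
  · -- simplicity
    intro S hS S' hS' hne
    rw [Finset.mem_union] at hS hS'
    have hcolT : ∀ (j : ℕ) (i : Fin m), ((col j ∩ T i).card ≤ 1) := by
      intro j i
      apply Finset.card_le_one.2
      intro a ha b hb
      rw [Finset.mem_inter] at ha hb
      simp only [hcol, hT, Finset.mem_filter, Finset.mem_univ, true_and] at ha hb
      have hs : gf k (i.val + 1) ≤ gf k i.val + k := by
        rw [gf_succ]; exact Nat.add_le_add_left (hstep _) _
      apply Fin.ext
      exact mod_interval_eq ha.2.1 (by omega) hb.2.1 (by omega) (ha.1.trans hb.1.symm)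
    rcases hS with hS | hS <;> rcases hS' with hS' | hS'
    · -- col vs col
      obtain ⟨j, hj, rfl⟩ := Finset.mem_image.1 hS
      obtain ⟨j', hj', rfl⟩ := Finset.mem_image.1 hS'
      have hjj : j ≠ j' := fun h => hne (by rw [h])
      have : col j ∩ col j' = ∅ := by
        ext p
        simp only [hcol, Finset.mem_inter, Finset.mem_filter, Finset.mem_univ, true_and,
          Finset.notMem_empty, iff_false, not_and]
        intro h1 h2
        exact hjj (h1.symm.trans h2)
      rw [this]
      simp
    · obtain ⟨j, hj, rfl⟩ := Finset.mem_image.1 hS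
      obtain ⟨i, _, rfl⟩ := Finset.mem_image.1 hS'
      exact hcolT j i
    · obtain ⟨i, _, rfl⟩ := Finset.mem_image.1 hS
      obtain ⟨j, hj, rfl⟩ := Finset.mem_image.1 hS'
      rw [Finset.inter_comm]
      exact hcolT j i
    · obtain ⟨i, _, rfl⟩ := Finset.mem_image.1 hS
      obtain ⟨i', _, rfl⟩ := Finset.mem_image.1 hS'
      have hii : i.val ≠ i'.val := by
        intro h
        exact hne (by rw [Fin.ext h])
      have hdisj : ∀ (a b : Fin m), a.val < b.val → (T a ∩ T b).card ≤ 1 := by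
        intro a b hab
        have : T a ∩ T b = ∅ := by
          ext p
          simp only [hT, Finset.mem_inter, Finset.mem_filter, Finset.mem_univ, true_and,
            Finset.notMem_empty, iff_false, not_and]
          rintro ⟨h1a, h1b⟩ h2 h3
          have : gf k (a.val + 1) ≤ gf k b.val := gf_mono (k := k) (by omega)
          omega
        rw [this]; simp
      rcases Nat.lt_or_ge i.val i'.val with h | h
      · exact hdisj i i' h
      · rw [Finset.inter_comm]
        exact hdisj i' i (by omega)
  · -- cover
    refine ⟨(Finset.range k).image col, Finset.subset_union_left, ?_, ?_⟩
    · rw [Finset.card_image_of_injOn, Finset.card_range]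
      intro j hj j' hj' hEq
      rw [Finset.mem_coe, Finset.mem_range] at hj hj'
      have hmem : (⟨j, lt_of_lt_of_le hj hkn⟩ : Fin (k * k)) ∈ col j := by
        simp [hcol, Nat.mod_eq_of_lt hj]
      rw [hEq] at hmem
      simp only [hcol, Finset.mem_filter, Finset.mem_univ, true_and] at hmem
      rwa [Nat.mod_eq_of_lt hj] at hmem
    · ext p
      simp only [Finset.mem_biUnion, Finset.mem_image, Finset.mem_range, id_eq,
        Finset.mem_univ, iff_true]
      refine ⟨col (p.val % k), ⟨p.val % k, Nat.mod_lt _ hk0, rfl⟩, ?_⟩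
      simp [hcol]
  · -- T i ∈ 𝓢
    intro i
    exact Finset.mem_union_right _ (Finset.mem_image.2 ⟨i, Finset.mem_univ _, rfl⟩)
  · -- prefix ≠ univ
    intro i heq
    rw [hcovered i] at heq
    have hx : (⟨gf k i.val, hltm i.val i.isLt⟩ : Fin (k * k)) ∈
        Finset.univ.filter fun p : Fin (k * k) => p.val < gf k i.val := by
      rw [heq]; exact Finset.mem_univ _
    simp at hx
  · -- greedy maximality
    intro i S hS
    rw [hcovered i]
    have hTd : T i \ (Finset.univ.filter fun p : Fin (k * k) => p.val < gf k i.val) = T i := by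
      ext p
      simp only [hT, Finset.mem_sdiff, Finset.mem_filter, Finset.mem_univ, true_and, not_lt]
      omega
    have hcardTi : (T i).card = k - gf k i.val / k := by
      rw [hT]
      simp only
      rw [card_interval (gf_le hk0 (i.val + 1)), gf_succ]
      omega
    rw [hTd, hcardTi]
    rw [Finset.mem_union] at hS
    rcases hS with hS | hS
    · -- column
      obtain ⟨j, hj, rfl⟩ := Finset.mem_image.1 hS
      calc (col j \ (Finset.univ.filter fun p : Fin (k * k) => p.val < gf k i.val)).card
          ≤ (Finset.Ico (gf k i.val / k) k).card := by
            apply Finset.card_le_card_of_injOn (fun p => p.val / k)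
            · intro p hp
              simp only [hcol, Finset.mem_coe, Finset.mem_sdiff, Finset.mem_filter, Finset.mem_univ, true_and,
                not_lt] at hp
              rw [Finset.mem_coe, Finset.mem_Ico]
              exact ⟨Nat.div_le_div_right hp.2, Nat.div_lt_of_lt_mul p.isLt⟩
            · intro p hp p' hp' hdiv
              simp only [hcol, Finset.mem_coe, Finset.mem_sdiff, Finset.mem_filter,
                Finset.mem_univ, true_and, not_lt] at hp hp'
              apply Fin.ext
              have hdiv' : p.val / k = p'.val / k := hdiv
              have e1 := Nat.div_add_mod p.val k
              have e2 := Nat.div_add_mod p'.val k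
              rw [hdiv'] at e1
              omega
        _ = k - gf k i.val / k := Nat.card_Ico _ _
    · -- another T
      obtain ⟨i', _, rfl⟩ := Finset.mem_image.1 hS
      rcases Nat.lt_or_ge i'.val i.val with h | h
      · have : T i' \ (Finset.univ.filter fun p : Fin (k * k) => p.val < gf k i.val) = ∅ := by
          ext p
          simp only [hT, Finset.mem_sdiff, Finset.mem_filter, Finset.mem_univ, true_and,
            not_lt, Finset.notMem_empty, iff_false, not_and]
          rintro ⟨h1a, h1b⟩ h2
          have : gf k (i'.val + 1) ≤ gf k i.val := gf_mono (k := k) (by omega)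
          omega
        rw [this]
        simp
      · calc (T i' \ (Finset.univ.filter fun p : Fin (k * k) => p.val < gf k i.val)).card
            ≤ (T i').card := Finset.card_le_card (Finset.sdiff_subset)
          _ = k - gf k i'.val / k := by
              rw [hT]
              simp only
              rw [card_interval (gf_le hk0 (i'.val + 1)), gf_succ]
              omega
          _ ≤ k - gf k i.val / k :=
              Nat.sub_le_sub_left (Nat.div_le_div_right (gf_mono h)) k
  · -- total union
    ext p
    simp only [Finset.mem_biUnion, Finset.mem_univ, iff_true, hT, Finset.mem_filter, true_and]
    have hp : p.val < gf k m := by rw [hgfm]; exact p.isLt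
    obtain ⟨j, hj, h1, h2⟩ := gf_decomp m p.val hp
    exact ⟨⟨j, hj⟩, h1, h2⟩
  · -- the bound
    exact m_bound hk hgfm
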